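/- Let 0 ≤ s ≤ t be real numbers, μ: Y → ℝ≥0 a log-supermodular function on Young's lattice, and g, h: Y → ℝ≥0 both increasing with respect to containment of partitions. Define formal power series F(k;z) = Σ_{λ∈Y} k(λ) μ(λ) f_λ^t z^{|λ|}/(|λ|!)^s. Then every coefficient of F(1;z)·F(gh;z) − F(g;z)·F(h;z) is nonnegative. -/

import Mathlib

open scoped Classical

/-- The number of standard Young tableaux of shape `μ`, counted as the number
of saturated chains from `∅` to `μ` in Young's lattice. -/
noncomputable def fSYT (μ : YoungDiagram) : ℕ :=
  Nat.card {l : List YoungDiagram //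
    l.Chain' (· ⋖ ·) ∧ l.head? = some ⊥ ∧ l.getLast? = some μ}

/-- The power series `F(k;z) = Σ_λ k(λ) μ(λ) f_λ^t z^{|λ|}/(|λ|!)^s`. -/
noncomputable def Fser (μ : YoungDiagram → ℝ) (s t : ℝ) (k : YoungDiagram → ℝ) :
    PowerSeries ℝ :=
  PowerSeries.mk fun n =>
    ∑ᶠ lam : {m : YoungDiagram // m.card = n},
      k lam.1 * μ lam.1 * (fSYT lam.1 : ℝ) ^ t / (n.factorial : ℝ) ^ s

open scoped FinsetFamily
open Filter
set_option maxHeartbeats 1600000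

namespace QFKG

/-- Erase a maximal cell. -/
lemma exists_erase (x y : YoungDiagram) (hxy : x < y) :
    ∃ y' : YoungDiagram, x ≤ y' ∧ y' < y ∧ y'.card + 1 = y.card := by
  have hne : (y.cells \ x.cells).Nonempty := by
    rw [Finset.sdiff_nonempty]
    intro hsub
    exact absurd (le_antisymm (le_of_lt hxy) hsub) hxy.ne
  obtain ⟨c, hc, hcmax⟩ : ∃ c ∈ y.cells \ x.cells, ∀ d ∈ y.cells \ x.cells, ¬ c < d := by
    obtain ⟨c, hc⟩ := Finset.exists_maximal hne
    exact ⟨c, hc.1, fun d hd hlt => hlt.not_ge (hc.2 hd hlt.le)⟩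
  simp only [Finset.mem_sdiff] at hc
  have hclower : ∀ d : ℕ × ℕ, d ∈ y → c ≤ d → d = c := by
    intro d hd hcd
    by_contra hne'
    refine hcmax d ?_ (lt_of_le_of_ne hcd (fun h => hne' h.symm))
    simp only [Finset.mem_sdiff]
    refine ⟨hd, fun hdx => hc.2 ?_⟩
    exact x.isLowerSet hcd hdx
  refine ⟨⟨y.cells.erase c, ?_⟩, ?_, ?_, ?_⟩
  · intro a b hba ha
    simp only [Finset.coe_erase, Set.mem_diff, Finset.mem_coe, Set.mem_singleton_iff] at ha ⊢
    refine ⟨y.isLowerSet hba ha.1, ?_⟩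
    intro hbc
    subst hbc
    exact ha.2 (hclower a ha.1 hba)
  · intro a ha
    have : a ∈ y := le_of_lt hxy ha
    show a ∈ y.cells.erase c
    simp only [YoungDiagram.mem_mk, Finset.mem_erase]
    exact ⟨fun h => hc.2 (h ▸ ha), this⟩
  · rw [← YoungDiagram.cells_ssubset_iff]
    exact Finset.erase_ssubset hc.1
  · simp [YoungDiagram.card, Finset.card_erase_of_mem hc.1, Nat.sub_add_cancel
      (Finset.card_pos.mpr ⟨c, hc.1⟩)]

lemma card_lt_of_lt {x y : YoungDiagram} (h : x < y) : x.card < y.card :=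
  Finset.card_lt_card h

lemma card_le_of_le {x y : YoungDiagram} (h : x ≤ y) : x.card ≤ y.card :=
  Finset.card_le_card h

/-- Covering in Young's lattice means adding one cell. -/
lemma covby_iff {x y : YoungDiagram} : x ⋖ y ↔ x ≤ y ∧ x.card + 1 = y.card := by
  constructor
  · rintro ⟨hlt, hnomid⟩
    obtain ⟨y', hxy', hy'y, hcard⟩ := exists_erase x y hlt
    have : x = y' := by
      rcases eq_or_lt_of_le hxy' with h | h
      · exact h
      · exact absurd hy'y (hnomid h)
    subst this
    exact ⟨le_of_lt hlt, hcard⟩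
  · rintro ⟨hle, hcard⟩
    have hlt : x < y := lt_of_le_of_ne hle (by
      intro h; subst h; omega)
    refine ⟨hlt, fun z hxz hzy => ?_⟩
    have h1 : x.card < z.card := card_lt_of_lt hxz
    have h2 : z.card < y.card := card_lt_of_lt hzy
    omega

lemma card_inf_add_card_sup (x y : YoungDiagram) :
    (x ⊓ y).card + (x ⊔ y).card = x.card + y.card := by
  simpa [YoungDiagram.card, YoungDiagram.cells_inf, YoungDiagram.cells_sup, add_comm] using
    Finset.card_union_add_card_inter x.cells y.cells

lemma coord_lt_card {μ : YoungDiagram} {c : ℕ × ℕ} (hc : c ∈ μ) :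
    c.1 < μ.card ∧ c.2 < μ.card := by
  constructor
  · have : (Finset.range (c.1 + 1)).card ≤ μ.cells.card := by
      apply Finset.card_le_card_of_injOn (fun k => (k, c.2))
      · intro k hk
        simp only [Finset.mem_coe, Finset.mem_range] at hk
        exact μ.up_left_mem (Nat.lt_succ_iff.mp hk) le_rfl hc
      · intro a _ b _ hab
        simpa using congrArg Prod.fst hab
    simpa using this
  · have : (Finset.range (c.2 + 1)).card ≤ μ.cells.card := by
      apply Finset.card_le_card_of_injOn (fun k => (c.1, k))
      · intro k hk
        simp only [Finset.mem_coe, Finset.mem_range] at hk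
        exact μ.up_left_mem le_rfl (Nat.lt_succ_iff.mp hk) hc
      · intro a _ b _ hab
        simpa using congrArg Prod.snd hab
    simpa using this

lemma cells_subset_box {μ : YoungDiagram} {n : ℕ} (h : μ.card ≤ n) :
    μ.cells ⊆ Finset.range n ×ˢ Finset.range n := by
  intro c hc
  obtain ⟨h1, h2⟩ := coord_lt_card (μ.mem_cells c |>.mp hc)
  simp only [Finset.mem_product, Finset.mem_range]
  omega

noncomputable instance fintypeYD (n : ℕ) : Fintype {m : YoungDiagram // m.card = n} := by
  have : Finite {m : YoungDiagram // m.card = n} := by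
    apply Finite.of_injective (β := {A // A ∈ (Finset.range n ×ˢ Finset.range n).powerset})
      (fun m => ⟨m.1.cells, Finset.mem_powerset.mpr (cells_subset_box (le_of_eq m.2))⟩)
    intro a b hab
    apply Subtype.ext
    apply YoungDiagram.ext
    simpa using congrArg Subtype.val hab
  exact Fintype.ofFinite _

noncomputable instance fintypeLE (P : YoungDiagram) : Fintype {m : YoungDiagram // m ≤ P} := by
  have : Finite {m : YoungDiagram // m ≤ P} := by
    apply Finite.of_injective (β := {A // A ∈ P.cells.powerset})
      (fun m => ⟨m.1.cells, Finset.mem_powerset.mpr m.2⟩)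
    intro a b hab
    apply Subtype.ext; apply YoungDiagram.ext
    simpa using congrArg Subtype.val hab
  exact Fintype.ofFinite _

noncomputable instance fintypeLT (P : YoungDiagram) : Fintype {m : YoungDiagram // m < P} := by
  have : Finite {m : YoungDiagram // m < P} :=
    Finite.of_injective (β := {m : YoungDiagram // m ≤ P})
      (fun m => ⟨m.1, le_of_lt m.2⟩) (fun a b hab => Subtype.ext (by
        simpa using congrArg Subtype.val hab))
  exact Fintype.ofFinite _

noncomputable instance fintypeCov (P : YoungDiagram) : Fintype {m : YoungDiagram // m ⋖ P} := by
  have : Finite {m : YoungDiagram // m ⋖ P} :=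
    Finite.of_injective (β := {m : YoungDiagram // m < P})
      (fun m => ⟨m.1, m.2.1⟩) (fun a b hab => Subtype.ext (by
        simpa using congrArg Subtype.val hab))
  exact Fintype.ofFinite _

/-- number of strict chains of length `k` from `⊥` to `P` (defined recursively). -/
noncomputable def SC : ℕ → YoungDiagram → ℕ
  | 0, P => if P = ⊥ then 1 else 0
  | (k+1), P => ∑ ν : {m : YoungDiagram // m < P}, SC k ν.1

/-- number of multichains of length `N` from `⊥` to `P` (defined recursively). -/
noncomputable def W : ℕ → YoungDiagram → ℕ
  | 0, P => if P = ⊥ then 1 else 0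
  | (N+1), P => ∑ ν : {m : YoungDiagram // m ≤ P}, W N ν.1

lemma SC_vanish : ∀ (k : ℕ) (P : YoungDiagram), P.card < k → SC k P = 0 := by
  intro k
  induction k with
  | zero => intro P h; omega
  | succ k ih =>
    intro P h
    rw [SC]
    apply Finset.sum_eq_zero
    intro ν _
    have h2 : ν.1.card < P.card := Finset.card_lt_card (YoungDiagram.cells_ssubset_iff.mpr ν.2)
    exact ih ν.1 (by omega)

noncomputable def leSplitEquiv (P : YoungDiagram) :
    {m : YoungDiagram // m ≤ P} ≃ (Unit ⊕ {m : YoungDiagram // m < P}) where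
  toFun m := if h : m.1 = P then Sum.inl () else Sum.inr ⟨m.1, lt_of_le_of_ne m.2 h⟩
  invFun x := x.elim (fun _ => ⟨P, le_rfl⟩) (fun m => ⟨m.1, le_of_lt m.2⟩)
  left_inv := by
    rintro ⟨m, hm⟩
    by_cases h : m = P
    · subst h; simp
    · simp [h]
  right_inv := by
    rintro (⟨⟩ | ⟨m, hm⟩)
    · simp
    · simp [ne_of_lt hm]

/-- Splitting the sum over `{m ≤ P}` into the term at `P` and the sum over `{m < P}`. -/
lemma sum_le_split (P : YoungDiagram) (f : YoungDiagram → ℕ) :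
    ∑ ν : {m : YoungDiagram // m ≤ P}, f ν.1 =
      f P + ∑ ν : {m : YoungDiagram // m < P}, f ν.1 := by
  classical
  rw [Fintype.sum_equiv (leSplitEquiv P) (fun ν => f ν.1)
    (fun x => x.elim (fun _ => f P) (fun m => f m.1))]
  · simp
  · intro ν
    by_cases h : ν.1 = P
    · simp [leSplitEquiv, h]
    · simp [leSplitEquiv, h]

lemma sum_lt_eq_sum_cov (P : YoungDiagram) (f : YoungDiagram → ℕ)
    (hf : ∀ ν : YoungDiagram, ν < P → ¬(ν ⋖ P) → f ν = 0) :
    ∑ ν : {m : YoungDiagram // m < P}, f ν.1 = ∑ ν : {m : YoungDiagram // m ⋖ P}, f ν.1 := by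
  classical
  rw [← Finset.sum_filter_of_ne (p := fun ν : {m : YoungDiagram // m < P} => ν.1 ⋖ P)
    (by intro x _ hx; by_contra hc; exact hx (hf x.1 x.2 hc))]
  refine Finset.sum_bij'
    (i := fun (ν : {m : YoungDiagram // m < P}) (hν : ν ∈ Finset.univ.filter (fun ν => ν.1 ⋖ P)) =>
      (⟨ν.1, (Finset.mem_filter.mp hν).2⟩ : {m : YoungDiagram // m ⋖ P}))
    (j := fun (ν : {m : YoungDiagram // m ⋖ P}) _ => (⟨ν.1, ν.2.1⟩ : {m : YoungDiagram // m < P}))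
    ?_ ?_ ?_ ?_ ?_ <;> intro ν hν
  · exact Finset.mem_univ _
  · simp only [Finset.mem_filter]
    exact ⟨Finset.mem_univ _, ν.2⟩
  · rfl
  · rfl
  · rfl

lemma W_eq_sum (N : ℕ) : ∀ P : YoungDiagram,
    W N P = ∑ k ∈ Finset.range (P.card + 1), SC k P * N.choose k := by
  induction N with
  | zero =>
    intro P
    by_cases h : P = ⊥
    · subst h
      have hc : (⊥ : YoungDiagram).card = 0 := rfl
      rw [W, hc]
      rw [Finset.sum_range_one, SC]
      simp
    · rw [W, if_neg h, Finset.sum_eq_zero]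
      intro k hk
      match k with
      | 0 => rw [SC, if_neg h]; ring
      | (k+1) => rw [Nat.choose_eq_zero_of_lt (by omega)]; ring
  | succ N ih =>
    intro P
    rw [W]
    calc ∑ ν : {m : YoungDiagram // m ≤ P}, W N ν.1
        = ∑ ν : {m : YoungDiagram // m ≤ P},
            ∑ k ∈ Finset.range (P.card + 1), SC k ν.1 * N.choose k := by
          apply Fintype.sum_congr
          intro ν
          rw [ih ν.1]
          apply Finset.sum_subset
          · intro k hk
            simp only [Finset.mem_range] at hk ⊢
            have := card_le_of_le ν.2
            omega
          · intro k _ hk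
            simp only [Finset.mem_range, not_lt] at hk
            rw [SC_vanish k ν.1 (by omega)]
            ring
      _ = ∑ k ∈ Finset.range (P.card + 1), (∑ ν : {m : YoungDiagram // m ≤ P}, SC k ν.1) * N.choose k := by
          rw [Finset.sum_comm]
          apply Finset.sum_congr rfl
          intro k _
          rw [Finset.sum_mul]
      _ = ∑ k ∈ Finset.range (P.card + 1), (SC k P + SC (k+1) P) * N.choose k := by
          apply Finset.sum_congr rfl
          intro k _
          rw [sum_le_split P (fun ν => SC k ν)]
          rfl
      _ = ∑ k ∈ Finset.range (P.card + 1), SC k P * (N+1).choose k := by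
          set p := P.card
          have h1 : ∀ k, (SC k P + SC (k+1) P) * N.choose k
              = SC k P * N.choose k + SC (k+1) P * N.choose k := fun k => by ring
          simp only [h1]
          rw [Finset.sum_add_distrib]
          have h2 : ∑ k ∈ Finset.range (p + 1), SC (k+1) P * N.choose k
              = ∑ k ∈ Finset.range p, SC (k+1) P * N.choose k := by
            rw [Finset.sum_range_succ, SC_vanish (p+1) P (by omega)]
            simp
          rw [h2]
          rw [Finset.sum_range_succ' (fun k => SC k P * N.choose k) p,
              Finset.sum_range_succ' (fun k => SC k P * (N+1).choose k) p]
          have h3 : ∀ k, SC (k+1) P * (N+1).choose (k+1)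
              = SC (k+1) P * N.choose k + SC (k+1) P * N.choose (k+1) := by
            intro k
            rw [Nat.choose_succ_succ]
            ring
          simp only [h3]
          rw [Finset.sum_add_distrib]
          simp [Nat.choose_zero_right]
          ring

def IsYD (A : Finset (ℕ × ℕ)) : Prop := IsLowerSet (↑A : Set (ℕ × ℕ))

noncomputable def liftYD (f : YoungDiagram → ℕ) (A : Finset (ℕ × ℕ)) : ℕ :=
  if h : IsYD A then f ⟨A, h⟩ else 0

lemma liftYD_cells (f : YoungDiagram → ℕ) (ν : YoungDiagram) : liftYD f ν.cells = f ν := by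
  rw [liftYD, dif_pos (show IsYD ν.cells from ν.isLowerSet)]

lemma sum_liftYD (f : YoungDiagram → ℕ) (P : YoungDiagram) :
    ∑ A ∈ P.cells.powerset, liftYD f A = ∑ ν : {m : YoungDiagram // m ≤ P}, f ν.1 := by
  classical
  have h1 : ∑ A ∈ P.cells.powerset.filter IsYD, liftYD f A
      = ∑ A ∈ P.cells.powerset, liftYD f A := by
    apply Finset.sum_filter_of_ne
    intro A _ hne
    by_contra hc
    exact hne (by rw [liftYD, dif_neg hc])
  rw [← h1]
  refine Finset.sum_bij'
    (i := fun (A : Finset (ℕ × ℕ)) (hA : A ∈ P.cells.powerset.filter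
        IsYD) =>
      (⟨⟨A, (Finset.mem_filter.mp hA).2⟩, by
        have := (Finset.mem_filter.mp hA).1
        rw [Finset.mem_powerset] at this
        exact this⟩ : {m : YoungDiagram // m ≤ P}))
    (j := fun ν _ => ν.1.cells) ?_ ?_ ?_ ?_ ?_
  · intro A hA; exact Finset.mem_univ _
  · intro ν _
    simp only [Finset.mem_filter, Finset.mem_powerset]
    exact ⟨ν.2, ν.1.isLowerSet⟩
  · intro A hA; rfl
  · intro ν _; rfl
  · intro A hA
    rw [liftYD, dif_pos (Finset.mem_filter.mp hA).2]

lemma W_lsm : ∀ (N : ℕ) (x y : YoungDiagram), W N x * W N y ≤ W N (x ⊓ y) * W N (x ⊔ y) := by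
  intro N
  induction N with
  | zero =>
    intro x y
    by_cases hx : x = ⊥
    · by_cases hy : y = ⊥
      · subst hx; subst hy
        simp [W]
      · rw [W, W, if_neg hy, mul_zero]
        exact Nat.zero_le _
    · rw [W, if_neg hx, zero_mul]
      exact Nat.zero_le _
  | succ N ih =>
    intro x y
    have key := Finset.four_functions_theorem (β := ℕ) (u := (x ⊔ y).cells)
      (f₁ := liftYD (W N)) (f₂ := liftYD (W N)) (f₃ := liftYD (W N)) (f₄ := liftYD (W N))
      (fun A => Nat.zero_le _) (fun A => Nat.zero_le _) (fun A => Nat.zero_le _)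
      (fun A => Nat.zero_le _) ?_ ?_ ?_
      (𝒜 := x.cells.powerset) (ℬ := y.cells.powerset)
    rotate_left
    · intro s _ t _
      rw [liftYD, liftYD]
      by_cases hs : IsYD s
      · by_cases ht : IsYD t
        · rw [dif_pos hs, dif_pos ht]
          have hst : IsYD (s ∩ t) := by
            rw [IsYD, Finset.coe_inter]; exact hs.inter ht
          have hst' : IsYD (s ∪ t) := by
            rw [IsYD, Finset.coe_union]; exact hs.union ht
          rw [liftYD, dif_pos hst, liftYD, dif_pos hst']
          have e1 : (⟨s ∩ t, hst⟩ : YoungDiagram) = ⟨s, hs⟩ ⊓ ⟨t, ht⟩ := by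
            apply YoungDiagram.ext; simp [YoungDiagram.cells_inf]
          have e2 : (⟨s ∪ t, hst'⟩ : YoungDiagram) = ⟨s, hs⟩ ⊔ ⟨t, ht⟩ := by
            apply YoungDiagram.ext; simp [YoungDiagram.cells_sup]
          rw [e1, e2]
          exact ih _ _
        · rw [dif_neg ht, mul_zero]; exact Nat.zero_le _
      · rw [dif_neg hs, zero_mul]; exact Nat.zero_le _
    · exact Finset.powerset_mono.mpr (by
        intro c hc; simp only [YoungDiagram.cells_sup, Finset.mem_union]; exact Or.inl hc)
    · exact Finset.powerset_mono.mpr (by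
        intro c hc; simp only [YoungDiagram.cells_sup, Finset.mem_union]; exact Or.inr hc)
    rw [W, W, W, W, ← sum_liftYD (W N) x, ← sum_liftYD (W N) y,
      ← sum_liftYD (W N) (x ⊓ y), ← sum_liftYD (W N) (x ⊔ y)]
    refine key.trans (Nat.mul_le_mul ?_ ?_)
    · apply Finset.sum_le_sum_of_subset_of_nonneg
      · intro A hA
        rw [Finset.mem_infs] at hA
        obtain ⟨a, ha, b, hb, rfl⟩ := hA
        rw [Finset.mem_powerset] at ha hb ⊢
        simp only [YoungDiagram.cells_inf]
        exact Finset.inter_subset_inter ha hb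
      · intros; exact Nat.zero_le _
    · apply Finset.sum_le_sum_of_subset_of_nonneg
      · intro A hA
        rw [Finset.mem_sups] at hA
        obtain ⟨a, ha, b, hb, rfl⟩ := hA
        rw [Finset.mem_powerset] at ha hb ⊢
        simp only [YoungDiagram.cells_sup]
        exact Finset.union_subset_union ha hb
      · intros; exact Nat.zero_le _

def ChainsTo (P : YoungDiagram) :=
  {l : List YoungDiagram // l.Chain' (· ⋖ ·) ∧ l.head? = some ⊥ ∧ l.getLast? = some P}

lemma fSYT_eq (P : YoungDiagram) : fSYT P = Nat.card (ChainsTo P) := rfl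

lemma chain_head_le_last : ∀ (l : List YoungDiagram), l.Chain' (· ⋖ ·) →
    ∀ a z, l.head? = some a → l.getLast? = some z → a ≤ z
  | [] => by simp
  | [x] => by
    intro _ a z ha hz
    simp only [List.head?] at ha
    injection ha with ha
    simp only [List.getLast?] at hz
    injection hz with hz
    subst ha; subst hz; exact le_rfl
  | x :: y :: l => by
    intro h a z ha hz
    rw [List.Chain', List.isChain_cons_cons] at h
    simp only [List.head?] at ha
    injection ha with ha
    subst ha
    rw [List.getLast?_cons_cons] at hz
    exact le_trans (le_of_lt h.1.1)
      (chain_head_le_last (y :: l) h.2 y z rfl hz)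

instance uniqueChainsBot : Unique (ChainsTo ⊥) where
  default := ⟨[⊥], List.isChain_singleton _, rfl, rfl⟩
  uniq := by
    rintro ⟨l, hc, hh, hl⟩
    apply Subtype.ext
    match l, hc, hh, hl with
    | [x], _, hh, hl =>
      simp only [List.head?] at hh
      injection hh with hh
      subst hh; rfl
    | x :: y :: l, hc, hh, hl =>
      exfalso
      simp only [List.head?] at hh
      injection hh with hh
      subst hh
      rw [List.Chain', List.isChain_cons_cons] at hc
      have h1 : y ≤ ⊥ := by
        rw [List.getLast?_cons_cons] at hl
        exact chain_head_le_last (y :: l) hc.2 y ⊥ rfl hl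
      exact absurd (lt_of_lt_of_le hc.1.1 h1) (lt_irrefl _)

lemma fSYT_bot : fSYT ⊥ = 1 := by
  rw [fSYT_eq, Nat.card_unique]

/-- concatenation map -/
def unpeel (P : YoungDiagram) (x : Σ ν : {m : YoungDiagram // m ⋖ P}, ChainsTo ν.1) :
    ChainsTo P := by
  refine ⟨x.2.1 ++ [P], ?_, ?_, ?_⟩
  · rw [List.Chain', List.isChain_append]
    refine ⟨x.2.2.1, List.isChain_singleton _, ?_⟩
    intro a ha b hb
    rw [x.2.2.2.2] at ha
    simp only [List.head?, Option.mem_def, Option.some_inj] at ha hb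
    subst ha; subst hb
    exact x.1.2
  · have hne : x.2.1 ≠ [] := by
      intro h
      have := x.2.2.2.1
      rw [h] at this
      simp at this
    rw [List.head?_append_of_ne_nil _ hne]
    exact x.2.2.2.1
  · exact List.getLast?_concat

lemma unpeel_bij (P : YoungDiagram) (hP : P ≠ ⊥) : Function.Bijective (unpeel P) := by
  constructor
  · rintro ⟨⟨ν₁, h₁⟩, ⟨l₁, p₁⟩⟩ ⟨⟨ν₂, h₂⟩, ⟨l₂, p₂⟩⟩ heq
    have hl : l₁ ++ [P] = l₂ ++ [P] := congrArg Subtype.val heq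
    have hll : l₁ = l₂ := List.append_left_injective _ hl
    subst hll
    have hν : ν₁ = ν₂ := by
      have e1 := p₁.2.2
      have e2 := p₂.2.2
      rw [e1] at e2
      injection e2
    subst hν
    rfl
  · rintro ⟨l, hc, hh, hl⟩
    have hne : l ≠ [] := by rintro rfl; simp at hh
    have hlast : l.getLast hne = P := by
      have := List.getLast?_eq_getLast_of_ne_nil hne
      rw [this] at hl
      injection hl
    have hrep : l.dropLast ++ [P] = l := by
      conv_rhs => rw [← List.dropLast_append_getLast hne]
      rw [hlast]
    have hdl : l.dropLast ≠ [] := by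
      intro h0
      have : l = [P] := by
        rw [← hrep, h0]; rfl
      rw [this] at hh
      simp only [List.head?] at hh
      injection hh with hh
      exact hP hh
    have hch : l.dropLast.Chain' (· ⋖ ·) ∧ ∀ a ∈ l.dropLast.getLast?, ∀ b ∈ ([P] : List YoungDiagram).head?, a ⋖ b := by
      have := hc
      rw [← hrep, List.Chain', List.isChain_append] at this
      exact ⟨this.1, this.2.2⟩
    have hgl : l.dropLast.getLast? = some (l.dropLast.getLast hdl) :=
      List.getLast?_eq_getLast_of_ne_nil hdl
    have hcov : l.dropLast.getLast hdl ⋖ P := by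
      refine hch.2 _ ?_ P ?_
      · rw [hgl]; rfl
      · rfl
    have hhd : l.dropLast.head? = some ⊥ := by
      rw [← hrep, List.head?_append_of_ne_nil _ hdl] at hh
      exact hh
    refine ⟨⟨⟨l.dropLast.getLast hdl, hcov⟩, ⟨l.dropLast, hch.1, hhd, hgl⟩⟩, ?_⟩
    apply Subtype.ext
    exact hrep

lemma card_eq_zero_iff {P : YoungDiagram} : P.card = 0 ↔ P = ⊥ := by
  constructor
  · intro h
    apply YoungDiagram.ext
    rw [Finset.card_eq_zero] at h
    simp [h]
  · rintro rfl; rfl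

lemma chainsTo_finite : ∀ (n : ℕ) (P : YoungDiagram), P.card = n → Finite (ChainsTo P) := by
  intro n
  induction n using Nat.strong_induction_on with
  | _ n ih =>
    intro P hP
    by_cases hbot : P = ⊥
    · subst hbot
      infer_instance
    · haveI : ∀ ν : {m : YoungDiagram // m ⋖ P}, Finite (ChainsTo ν.1) := by
        intro ν
        exact ih ν.1.card (by rw [← hP]; exact card_lt_of_lt ν.2.1) ν.1 rfl
      exact Finite.of_surjective (unpeel P) (unpeel_bij P hbot).2

noncomputable instance chainsToFintype (P : YoungDiagram) : Fintype (ChainsTo P) := by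
  have := chainsTo_finite P.card P rfl
  exact Fintype.ofFinite _

lemma fSYT_rec (P : YoungDiagram) (hP : P ≠ ⊥) :
    fSYT P = ∑ ν : {m : YoungDiagram // m ⋖ P}, fSYT ν.1 := by
  rw [fSYT_eq, ← Nat.card_congr (Equiv.ofBijective _ (unpeel_bij P hP))]
  rw [Nat.card_eq_fintype_card, Fintype.card_sigma]
  apply Finset.sum_congr rfl
  intro ν _
  rw [fSYT_eq, Nat.card_eq_fintype_card]

lemma fSYT_eq_SC : ∀ (n : ℕ) (P : YoungDiagram), P.card = n → fSYT P = SC P.card P := by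
  intro n
  induction n using Nat.strong_induction_on with
  | _ n ih =>
    intro P hP
    by_cases hbot : P = ⊥
    · subst hbot
      rw [fSYT_bot]
      have : (⊥ : YoungDiagram).card = 0 := rfl
      rw [this, SC]
      simp
    · obtain ⟨q, hq⟩ : ∃ q, P.card = q + 1 :=
        Nat.exists_eq_succ_of_ne_zero (fun h => hbot (card_eq_zero_iff.mp h))
      rw [hq, SC]
      rw [sum_lt_eq_sum_cov P (fun ν => SC q ν) (by
        intro ν hlt hncov
        apply SC_vanish
        have h1 : ν.card + 1 ≤ P.card := by
          have := card_lt_of_lt hlt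
          omega
        rcases Nat.lt_or_ge ν.card q with h | h
        · exact h
        · exfalso
          apply hncov
          rw [covby_iff]
          exact ⟨le_of_lt hlt, by omega⟩)]
      rw [fSYT_rec P hbot]
      apply Finset.sum_congr rfl
      intro ν _
      have hcard : ν.1.card = q := by
        have := (covby_iff.mp ν.2).2
        omega
      rw [ih ν.1.card (by omega) ν.1 rfl, hcard]

lemma tendsto_descFactorial (k : ℕ) :
    Tendsto (fun N : ℕ => (N.descFactorial k : ℝ) / (N : ℝ) ^ k) atTop (nhds 1) := by
  induction k with
  | zero => simpa using tendsto_const_nhds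
  | succ k ih =>
    have h1 : Tendsto (fun N : ℕ => ((N - k : ℕ) : ℝ) / (N : ℝ)) atTop (nhds 1) := by
      have h2 : Tendsto (fun N : ℕ => 1 - (k : ℝ) / (N : ℝ)) atTop (nhds 1) := by
        have := (tendsto_const_div_atTop_nhds_zero_nat (k : ℝ)).const_sub 1
        simpa using this
      apply h2.congr'
      filter_upwards [eventually_ge_atTop (k + 1)] with N hN
      have hN0 : (N:ℝ) ≠ 0 := by
        have : (0:ℕ) < N := by omega
        positivity
      rw [Nat.cast_sub (by omega)]
      field_simp
    have h3 := h1.mul ih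
    rw [one_mul] at h3
    apply h3.congr'
    filter_upwards [eventually_ge_atTop 1] with N hN
    rw [Nat.descFactorial_succ]
    push_cast
    rw [pow_succ, div_mul_div_comm, mul_comm ((N:ℝ)) ((N:ℝ)^k)]

lemma tendsto_choose (k : ℕ) :
    Tendsto (fun N : ℕ => (N.choose k : ℝ) / (N : ℝ) ^ k) atTop
      (nhds (1 / (k.factorial : ℝ))) := by
  have key : ∀ N : ℕ, (N.choose k : ℝ) = (N.descFactorial k : ℝ) / (k.factorial : ℝ) := by
    intro N
    rw [Nat.choose_eq_descFactorial_div_factorial]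
    rw [Nat.cast_div (Nat.factorial_dvd_descFactorial N k)]
    positivity
  simp only [key]
  have h := (tendsto_descFactorial k).div_const (k.factorial : ℝ)
  rw [one_div]
  rw [one_div] at h
  exact h.congr (fun N => by ring)

lemma tendsto_choose_pow {k p : ℕ} (hkp : k ≤ p) :
    Tendsto (fun N : ℕ => (N.choose k : ℝ) / (N : ℝ) ^ p) atTop
      (nhds (if k = p then 1 / (k.factorial : ℝ) else 0)) := by
  rcases eq_or_lt_of_le hkp with rfl | hlt
  · simpa using tendsto_choose k
  · rw [if_neg (by omega)]
    have h2 : Tendsto (fun N : ℕ => (1:ℝ) / (N:ℝ) ^ (p - k)) atTop (nhds 0) := by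
      apply Tendsto.comp (f := fun N : ℕ => ((N:ℝ))^(p-k)) (g := fun x : ℝ => 1/x)
      · exact tendsto_inv_atTop_zero.congr (fun x => by rw [one_div])
      · apply Tendsto.comp (tendsto_pow_atTop (by omega)) tendsto_natCast_atTop_atTop
    have := (tendsto_choose k).mul h2
    rw [mul_zero] at this
    apply this.congr'
    filter_upwards [eventually_ge_atTop 1] with N hN
    have hN0 : (N:ℝ) ≠ 0 := by positivity
    rw [div_mul_div_comm, mul_one, ← pow_add]
    have hkp' : k + (p - k) = p := by omega
    rw [hkp']

/-- main limit: `W N P / N ^ |P|` tends to `fSYT P / |P|!`. -/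
lemma tendsto_W (P : YoungDiagram) :
    Tendsto (fun N : ℕ => (W N P : ℝ) / (N : ℝ) ^ P.card) atTop
      (nhds ((fSYT P : ℝ) / (P.card.factorial : ℝ))) := by
  have hW : ∀ N : ℕ, (W N P : ℝ) / (N:ℝ) ^ P.card
      = ∑ k ∈ Finset.range (P.card + 1), (SC k P : ℝ) * ((N.choose k : ℝ) / (N:ℝ) ^ P.card) := by
    intro N
    rw [W_eq_sum N P]
    push_cast
    rw [Finset.sum_div]
    apply Finset.sum_congr rfl
    intro k _
    ring
  simp only [hW]
  have hlim : Tendsto (fun N : ℕ => ∑ k ∈ Finset.range (P.card + 1),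
      (SC k P : ℝ) * ((N.choose k : ℝ) / (N:ℝ) ^ P.card)) atTop
      (nhds (∑ k ∈ Finset.range (P.card + 1),
        (SC k P : ℝ) * (if k = P.card then 1 / (k.factorial : ℝ) else 0))) := by
    apply tendsto_finset_sum
    intro k hk
    exact (tendsto_choose_pow (by simp only [Finset.mem_range] at hk; omega)).const_mul _
  convert hlim using 2
  rw [Finset.sum_congr rfl (fun k _ => by rw [mul_ite, mul_zero])]
  rw [Finset.sum_ite_eq' (Finset.range (P.card + 1)) P.card
    (fun k => (SC k P : ℝ) * (1 / (k.factorial : ℝ)))]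
  rw [if_pos (by simp)]
  rw [← fSYT_eq_SC P.card P rfl]
  ring

/-- Lemma 2: normalized SYT counts are log-supermodular. -/
lemma normalized_lsm (x y : YoungDiagram) :
    (fSYT x : ℝ) / (x.card.factorial : ℝ) * ((fSYT y : ℝ) / (y.card.factorial : ℝ)) ≤
    (fSYT (x ⊓ y) : ℝ) / ((x ⊓ y).card.factorial : ℝ) *
      ((fSYT (x ⊔ y) : ℝ) / ((x ⊔ y).card.factorial : ℝ)) := by
  have hA := (tendsto_W x).mul (tendsto_W y)
  have hB := (tendsto_W (x ⊓ y)).mul (tendsto_W (x ⊔ y))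
  refine le_of_tendsto_of_tendsto hA hB ?_
  filter_upwards [eventually_ge_atTop 1] with N hN
  · have hN0 : (0:ℝ) < (N:ℝ) := by exact_mod_cast (by omega : 0 < N)
    have key := W_lsm N x y
    have hcard := card_inf_add_card_sup x y
    rw [div_mul_div_comm, div_mul_div_comm, ← pow_add, ← pow_add]
    rw [div_le_div_iff₀ (by positivity) (by positivity)]
    calc (W N x : ℝ) * (W N y) * ((N:ℝ) ^ ((x ⊓ y).card + (x ⊔ y).card))
        = (W N x : ℝ) * (W N y) * ((N:ℝ) ^ (x.card + y.card)) := by rw [hcard]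
      _ ≤ (W N (x ⊓ y) : ℝ) * (W N (x ⊔ y)) * ((N:ℝ) ^ (x.card + y.card)) := by
          apply mul_le_mul_of_nonneg_right _ (by positivity)
          exact_mod_cast key

lemma fact_spread_aux (k : ℕ) : ∀ a b : ℕ, a ≤ b →
    (a + k).factorial * b.factorial ≤ a.factorial * (b + k).factorial := by
  induction k with
  | zero => intro a b _; simp [mul_comm]
  | succ k ih =>
    intro a b hab
    have h1 : (a + (k+1)).factorial = (a + k + 1) * (a + k).factorial := by
      rw [show a + (k+1) = (a + k) + 1 by ring, Nat.factorial_succ]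
    have h2 : (b + (k+1)).factorial = (b + k + 1) * (b + k).factorial := by
      rw [show b + (k+1) = (b + k) + 1 by ring, Nat.factorial_succ]
    rw [h1, h2]
    calc (a + k + 1) * (a + k).factorial * b.factorial
        ≤ (a + k + 1) * (a.factorial * (b + k).factorial) := by
          rw [mul_assoc]
          exact Nat.mul_le_mul_left _ (ih a b hab)
      _ ≤ (b + k + 1) * (a.factorial * (b + k).factorial) :=
          Nat.mul_le_mul_right _ (by omega)
      _ = a.factorial * ((b + k + 1) * (b + k).factorial) := by ring

/-- factorial spread: `|x|! |y|! ≤ |x ⊓ y|! |x ⊔ y|!` -/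
lemma fact_lsm (x y : YoungDiagram) :
    x.card.factorial * y.card.factorial ≤
      (x ⊓ y).card.factorial * (x ⊔ y).card.factorial := by
  set a := (x ⊓ y).card
  have hax : a ≤ x.card := card_le_of_le inf_le_left
  have hay : a ≤ y.card := card_le_of_le inf_le_right
  obtain ⟨k, hk⟩ : ∃ k, x.card = a + k := ⟨x.card - a, by omega⟩
  have hsup : (x ⊔ y).card = y.card + k := by
    have := card_inf_add_card_sup x y
    omega
  rw [hk, hsup]
  exact fact_spread_aux k a y.card hay

/-- the FKG weight -/
noncomputable def wfun (μ : YoungDiagram → ℝ) (s t : ℝ) (P : YoungDiagram) : ℝ :=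
  μ P * (fSYT P : ℝ) ^ t / (P.card.factorial : ℝ) ^ s

lemma wfun_nonneg (μ : YoungDiagram → ℝ) (hμ0 : ∀ x, 0 ≤ μ x) (s t : ℝ) (P : YoungDiagram) :
    0 ≤ wfun μ s t P := by
  rw [wfun]
  have h1 : (0:ℝ) ≤ (fSYT P : ℝ) ^ t := Real.rpow_nonneg (by positivity) t
  have h2 : (0:ℝ) < (P.card.factorial : ℝ) ^ s :=
    Real.rpow_pos_of_pos (by positivity) s
  exact div_nonneg (mul_nonneg (hμ0 P) h1) h2.le

lemma wfun_lsm (μ : YoungDiagram → ℝ) (s t : ℝ) (hs : 0 ≤ s) (hst : s ≤ t)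
    (hμ0 : ∀ x, 0 ≤ μ x)
    (hμ : ∀ x y : YoungDiagram, μ x * μ y ≤ μ (x ⊓ y) * μ (x ⊔ y))
    (x y : YoungDiagram) :
    wfun μ s t x * wfun μ s t y ≤ wfun μ s t (x ⊓ y) * wfun μ s t (x ⊔ y) := by
  -- B P := (fSYT P)^t / (P.card!)^s  =  (R P)^t * (F P)^(t - s)
  set R : YoungDiagram → ℝ := fun P => (fSYT P : ℝ) / (P.card.factorial : ℝ) with hR
  set F : YoungDiagram → ℝ := fun P => (P.card.factorial : ℝ) with hF
  have hFpos : ∀ P, 0 < F P := fun P => by positivity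
  have hRnn : ∀ P, 0 ≤ R P := fun P => by positivity
  have hB : ∀ P : YoungDiagram, (fSYT P : ℝ) ^ t / (P.card.factorial : ℝ) ^ s
      = (R P) ^ t * (F P) ^ (t - s) := by
    intro P
    rw [hR, hF]
    rw [Real.div_rpow (by positivity) (by positivity)]
    rw [Real.rpow_sub (by positivity)]
    field_simp
  have key1 : R x * R y ≤ R (x ⊓ y) * R (x ⊔ y) := normalized_lsm x y
  have key2 : F x * F y ≤ F (x ⊓ y) * F (x ⊔ y) := by
    simp only [hF]
    exact_mod_cast fact_lsm x y
  have hBineq : ((fSYT x : ℝ) ^ t / (x.card.factorial : ℝ) ^ s) *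
      ((fSYT y : ℝ) ^ t / (y.card.factorial : ℝ) ^ s) ≤
      ((fSYT (x ⊓ y) : ℝ) ^ t / ((x ⊓ y).card.factorial : ℝ) ^ s) *
      ((fSYT (x ⊔ y) : ℝ) ^ t / ((x ⊔ y).card.factorial : ℝ) ^ s) := by
    rw [hB, hB, hB, hB]
    calc R x ^ t * F x ^ (t-s) * (R y ^ t * F y ^ (t-s))
        = (R x * R y) ^ t * (F x * F y) ^ (t-s) := by
          rw [Real.mul_rpow (hRnn x) (hRnn y), Real.mul_rpow (hFpos x).le (hFpos y).le]
          ring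
      _ ≤ (R (x ⊓ y) * R (x ⊔ y)) ^ t * (F (x ⊓ y) * F (x ⊔ y)) ^ (t-s) := by
          apply mul_le_mul
          · exact Real.rpow_le_rpow (by positivity) key1 (by linarith)
          · exact Real.rpow_le_rpow (by positivity) key2 (by linarith)
          · positivity
          · positivity
      _ = R (x ⊓ y) ^ t * F (x ⊓ y) ^ (t-s) * (R (x ⊔ y) ^ t * F (x ⊔ y) ^ (t-s)) := by
          rw [Real.mul_rpow (hRnn _) (hRnn _), Real.mul_rpow (hFpos _).le (hFpos _).le]
          ring
  -- combine with μ
  rw [wfun, wfun, wfun, wfun]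
  have e : ∀ P : YoungDiagram, μ P * (fSYT P : ℝ) ^ t / (P.card.factorial : ℝ) ^ s
      = μ P * ((fSYT P : ℝ) ^ t / (P.card.factorial : ℝ) ^ s) := fun P => by ring
  rw [e, e, e, e]
  calc μ x * ((fSYT x:ℝ)^t / (x.card.factorial:ℝ)^s) * (μ y * ((fSYT y:ℝ)^t / (y.card.factorial:ℝ)^s))
      = (μ x * μ y) * (((fSYT x:ℝ)^t / (x.card.factorial:ℝ)^s) * ((fSYT y:ℝ)^t / (y.card.factorial:ℝ)^s)) := by ring
    _ ≤ (μ (x ⊓ y) * μ (x ⊔ y)) * (((fSYT (x⊓y):ℝ)^t / ((x⊓y).card.factorial:ℝ)^s) * ((fSYT (x⊔y):ℝ)^t / ((x⊔y).card.factorial:ℝ)^s)) := by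
        apply mul_le_mul (hμ x y) hBineq
        · have h1 : (0:ℝ) ≤ (fSYT x : ℝ) ^ t := Real.rpow_nonneg (by positivity) t
          have h2 : (0:ℝ) < (x.card.factorial : ℝ) ^ s := Real.rpow_pos_of_pos (by positivity) s
          have h3 : (0:ℝ) ≤ (fSYT y : ℝ) ^ t := Real.rpow_nonneg (by positivity) t
          have h4 : (0:ℝ) < (y.card.factorial : ℝ) ^ s := Real.rpow_pos_of_pos (by positivity) s
          positivity
        · exact mul_nonneg (hμ0 _) (hμ0 _)
    _ = _ := by ring

lemma xy_lemma {X Y M W : ℝ} (hX : 0 ≤ X) (hY : 0 ≤ Y) (hW : 0 ≤ W)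
    (hXM : X ≤ M) (hYM : Y ≤ M) (hprod : X * Y ≤ M * W) : X + Y ≤ M + W := by
  rcases eq_or_lt_of_le (le_trans hX hXM) with hM | hM
  · have hX0 : X = 0 := le_antisymm (hM ▸ hXM) hX
    have hY0 : Y = 0 := le_antisymm (hM ▸ hYM) hY
    rw [hX0, hY0, add_zero]
    exact add_nonneg (le_trans hX hXM) hW
  · have key : M * (X + Y) ≤ M * (M + W) := by
      have h1 : 0 ≤ (M - X) * (M - Y) :=
        mul_nonneg (sub_nonneg.mpr hXM) (sub_nonneg.mpr hYM)
      nlinarith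
    exact le_of_mul_le_mul_left key hM

lemma sum_powerset_sdiff {ι : Type*} [DecidableEq ι] (c : Finset ι) (f : Finset ι → ℝ) :
    ∑ u ∈ c.powerset, f (c \ u) = ∑ u ∈ c.powerset, f u := by
  refine Finset.sum_nbij' (i := fun u => c \ u) (j := fun u => c \ u) ?_ ?_ ?_ ?_ ?_
  · intro a ha
    exact Finset.mem_powerset.mpr (Finset.sdiff_subset)
  · intro a ha
    exact Finset.mem_powerset.mpr (Finset.sdiff_subset)
  · intro a ha
    exact Finset.sdiff_sdiff_eq_self (Finset.mem_powerset.mp ha)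
  · intro a ha
    exact Finset.sdiff_sdiff_eq_self (Finset.mem_powerset.mp ha)
  · intro a ha; rfl

lemma star {ι : Type*} [DecidableEq ι] :
    ∀ (c : Finset ι) (α β γ δ : Finset ι → ℝ),
      (∀ A, 0 ≤ α A) → (∀ A, 0 ≤ β A) → (∀ A, 0 ≤ γ A) → (∀ A, 0 ≤ δ A) →
      (∀ u v : Finset ι, u ⊆ c → v ⊆ c → α u * β v ≤ γ (u ∪ v) * δ (u ∩ v)) →
      ∑ u ∈ c.powerset, α u * β (c \ u) ≤ ∑ u ∈ c.powerset, γ u * δ (c \ u) := by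
  intro c
  induction c using Finset.induction_on with
  | empty =>
    intro α β γ δ _ _ _ _ hyp
    simp only [Finset.powerset_empty, Finset.sum_singleton, Finset.sdiff_empty,
      Finset.sdiff_self]
    simpa using hyp ∅ ∅ (by simp) (by simp)
  | @insert z c' hz ih =>
    intro α β γ δ hα hβ hγ hδ hyp
    have hzc : z ∉ c' := hz
    -- sdiff identities
    have sd1 : ∀ u : Finset ι, u ⊆ c' → insert z c' \ u = insert z (c' \ u) := by
      intro u hu
      rw [Finset.insert_sdiff_of_notMem]
      intro hzu; exact hzc (hu hzu)
    have sd2 : ∀ u : Finset ι, u ⊆ c' → insert z c' \ insert z u = c' \ u := by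
      intro u hu
      ext a
      simp only [Finset.mem_sdiff, Finset.mem_insert]
      constructor
      · rintro ⟨ha1 | ha2, ha3⟩
        · exact absurd (Or.inl ha1) ha3
        · exact ⟨ha2, fun h => ha3 (Or.inr h)⟩
      · rintro ⟨ha, hna⟩
        refine ⟨Or.inr ha, ?_⟩
        rintro (rfl | h)
        · exact hzc ha
        · exact hna h
    rw [Finset.sum_powerset_insert hzc, Finset.sum_powerset_insert hzc]
    have e1 : ∀ S : Finset ι → ℝ, ∀ T : Finset ι → ℝ,
        ∑ u ∈ c'.powerset, S u * T (insert z c' \ u)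
          = ∑ u ∈ c'.powerset, S u * T (insert z (c' \ u)) := by
      intro S T
      apply Finset.sum_congr rfl
      intro u hu
      rw [sd1 u (Finset.mem_powerset.mp hu)]
    have e2 : ∀ S : Finset ι → ℝ, ∀ T : Finset ι → ℝ,
        ∑ u ∈ c'.powerset, S (insert z u) * T (insert z c' \ insert z u)
          = ∑ u ∈ c'.powerset, S (insert z u) * T (c' \ u) := by
      intro S T
      apply Finset.sum_congr rfl
      intro u hu
      rw [sd2 u (Finset.mem_powerset.mp hu)]
    rw [e1 α β, e2 α β, e1 γ δ, e2 γ δ]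
    -- names
    set X := ∑ u ∈ c'.powerset, α (insert z u) * β (c' \ u) with hX
    set Y := ∑ u ∈ c'.powerset, α u * β (insert z (c' \ u)) with hY
    set M := ∑ u ∈ c'.powerset, γ (insert z u) * δ (c' \ u) with hM
    set Wq := ∑ u ∈ c'.powerset, γ u * δ (insert z (c' \ u)) with hW
    have hXM : X ≤ M := by
      apply ih (fun u => α (insert z u)) β (fun u => γ (insert z u)) δ
        (fun A => hα _) hβ (fun A => hγ _) hδ
      intro u v hu hv
      have := hyp (insert z u) v (Finset.insert_subset_insert z hu)
        (hv.trans (Finset.subset_insert z c'))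
      rwa [Finset.insert_union, Finset.insert_inter_of_notMem (fun h => hzc (hv h))] at this
    have hYM : Y ≤ M := by
      apply ih α (fun v => β (insert z v)) (fun u => γ (insert z u)) δ
        hα (fun A => hβ _) (fun A => hγ _) hδ
      intro u v hu hv
      have := hyp u (insert z v) (hu.trans (Finset.subset_insert z c'))
        (Finset.insert_subset_insert z hv)
      rwa [Finset.union_insert, Finset.inter_insert_of_notMem (fun h => hzc (hu h))] at this
    have hprod : X * Y ≤ M * Wq := by
      -- four functions theorem
      set φ : Finset ι → ℝ := fun u => α (insert z u) * β (c' \ u) with hφ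
      set ψ : Finset ι → ℝ := fun v => α (c' \ v) * β (insert z v) with hψ
      set m : Finset ι → ℝ := fun u => γ (insert z u) * δ (c' \ u) with hm
      set w : Finset ι → ℝ := fun v => γ (c' \ v) * δ (insert z v) with hw
      have hY' : Y = ∑ v ∈ c'.powerset, ψ v := by
        rw [hY, hψ, ← sum_powerset_sdiff c' (fun v => α (c' \ v) * β (insert z v))]
        apply Finset.sum_congr rfl
        intro u hu
        rw [Finset.sdiff_sdiff_eq_self (Finset.mem_powerset.mp hu)]
      have hW' : Wq = ∑ v ∈ c'.powerset, w v := by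
        rw [hW, hw, ← sum_powerset_sdiff c' (fun v => γ (c' \ v) * δ (insert z v))]
        apply Finset.sum_congr rfl
        intro u hu
        rw [Finset.sdiff_sdiff_eq_self (Finset.mem_powerset.mp hu)]
      have h4f := Finset.four_functions_theorem (β := ℝ) (u := c')
        (f₁ := φ) (f₂ := ψ) (f₃ := w) (f₄ := m)
        (fun A => mul_nonneg (hα _) (hβ _)) (fun A => mul_nonneg (hα _) (hβ _))
        (fun A => mul_nonneg (hγ _) (hδ _)) (fun A => mul_nonneg (hγ _) (hδ _))
        ?_ (Finset.Subset.refl _) (Finset.Subset.refl _)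
        (𝒜 := c'.powerset) (ℬ := c'.powerset)
      · rw [Finset.powerset_infs_powerset_self, Finset.powerset_sups_powerset_self] at h4f
        rw [hX, hY', hM, hW']
        calc (∑ u ∈ c'.powerset, φ u) * ∑ v ∈ c'.powerset, ψ v
            ≤ (∑ u ∈ c'.powerset, w u) * ∑ u ∈ c'.powerset, m u := h4f
          _ = (∑ u ∈ c'.powerset, m u) * ∑ u ∈ c'.powerset, w u := by ring
      · -- pointwise hypothesis
        intro s hs t ht
        have hs' : s ⊆ c' := hs
        have ht' : t ⊆ c' := ht
        have id1 : insert z s ∪ insert z t = insert z (s ∪ t) := by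
          ext a; simp only [Finset.mem_union, Finset.mem_insert]; tauto
        have id2 : insert z s ∩ insert z t = insert z (s ∩ t) := by
          ext a; simp only [Finset.mem_inter, Finset.mem_insert]; tauto
        have id3 : (c' \ t) ∪ (c' \ s) = c' \ (s ∩ t) := by
          ext a; simp only [Finset.mem_union, Finset.mem_sdiff, Finset.mem_inter]; tauto
        have id4 : (c' \ t) ∩ (c' \ s) = c' \ (s ∪ t) := by
          ext a; simp only [Finset.mem_inter, Finset.mem_sdiff, Finset.mem_union]; tauto
        have key1 := hyp (insert z s) (insert z t)
          (Finset.insert_subset_insert z hs') (Finset.insert_subset_insert z ht')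
        rw [id1, id2] at key1
        have key2 := hyp (c' \ t) (c' \ s)
          ((Finset.sdiff_subset).trans (Finset.subset_insert z c'))
          ((Finset.sdiff_subset).trans (Finset.subset_insert z c'))
        rw [id3, id4] at key2
        calc φ s * ψ t = (α (insert z s) * β (insert z t)) * (α (c' \ t) * β (c' \ s)) := by
              rw [hφ, hψ]; ring
          _ ≤ (γ (insert z (s ∪ t)) * δ (insert z (s ∩ t))) *
                (γ (c' \ (s ∩ t)) * δ (c' \ (s ∪ t))) := by
              apply mul_le_mul key1 key2
                (mul_nonneg (hα _) (hβ _)) (mul_nonneg (hγ _) (hδ _))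
          _ = w (s ∩ t) * m (s ∪ t) := by rw [hw, hm]; ring
    have hXnn : 0 ≤ X := Finset.sum_nonneg fun u _ => mul_nonneg (hα _) (hβ _)
    have hYnn : 0 ≤ Y := Finset.sum_nonneg fun u _ => mul_nonneg (hα _) (hβ _)
    have hWnn : 0 ≤ Wq := Finset.sum_nonneg fun u _ => mul_nonneg (hγ _) (hδ _)
    have := xy_lemma hXnn hYnn hWnn hXM hYM hprod
    linarith

variable {ι : Type*} [DecidableEq ι]

/-- reindexing pairs `(a,b)` with `|a|+|b| = n` by `(i = a∩b, c = aΔb, u = a\b)`. -/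
lemma pair_reindex (E : Finset ι) (n : ℕ) (F : Finset ι → Finset ι → ℝ) :
    ∑ x ∈ ((E.powerset ×ˢ E.powerset).filter
        (fun q => Disjoint q.1 q.2 ∧ 2 * q.1.card + q.2.card = n)).sigma
        (fun q => q.2.powerset),
      F (x.1.1 ∪ x.2) (x.1.1 ∪ (x.1.2 \ x.2)) =
    ∑ p ∈ (E.powerset ×ˢ E.powerset).filter (fun p => p.1.card + p.2.card = n),
      F p.1 p.2 := by
  refine Finset.sum_nbij'
    (i := fun x => (x.1.1 ∪ x.2, x.1.1 ∪ (x.1.2 \ x.2)))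
    (j := fun p => ⟨(p.1 ∩ p.2, (p.1 ∪ p.2) \ (p.1 ∩ p.2)), p.1 \ p.2⟩)
    ?_ ?_ ?_ ?_ ?_
  · -- i maps into pairs
    rintro ⟨⟨i, c⟩, u⟩ hx
    simp only [Finset.mem_sigma, Finset.mem_filter, Finset.mem_product,
      Finset.mem_powerset] at hx ⊢
    obtain ⟨⟨⟨hiE, hcE⟩, hdisj, hgrade⟩, huc⟩ := hx
    have hui : Disjoint i u := hdisj.mono_right huc
    have hudc : Disjoint i (c \ u) := hdisj.mono_right (Finset.sdiff_subset)
    refine ⟨⟨Finset.union_subset hiE (huc.trans hcE),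
      Finset.union_subset hiE ((Finset.sdiff_subset).trans hcE)⟩, ?_⟩
    rw [Finset.card_union_of_disjoint hui, Finset.card_union_of_disjoint hudc,
      Finset.card_sdiff_of_subset huc]
    have := Finset.card_le_card huc
    omega
  · -- j maps into sigma
    rintro ⟨a, b⟩ hp
    simp only [Finset.mem_filter, Finset.mem_product, Finset.mem_powerset] at hp
    obtain ⟨⟨haE, hbE⟩, hgrade⟩ := hp
    simp only [Finset.mem_sigma, Finset.mem_filter, Finset.mem_product, Finset.mem_powerset]
    refine ⟨⟨⟨(Finset.inter_subset_left).trans haE,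
      (Finset.sdiff_subset).trans (Finset.union_subset haE hbE)⟩,
      Finset.disjoint_sdiff, ?_⟩, ?_⟩
    · rw [Finset.card_sdiff_of_subset (Finset.inter_subset_union)]
      have h1 := Finset.card_union_add_card_inter a b
      have h2 := Finset.card_le_card (Finset.inter_subset_union (s := a) (t := b))
      omega
    · intro x hx
      simp only [Finset.mem_sdiff, Finset.mem_union, Finset.mem_inter] at hx ⊢
      tauto
  · -- left inverse : j (i x) = x
    rintro ⟨⟨i, c⟩, u⟩ hx
    simp only [Finset.mem_sigma, Finset.mem_filter, Finset.mem_product,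
      Finset.mem_powerset] at hx
    obtain ⟨⟨⟨hiE, hcE⟩, hdisj, hgrade⟩, huc⟩ := hx
    have hic : ∀ y, y ∈ i → y ∉ c := fun y hy => Finset.disjoint_left.mp hdisj hy
    have huc' : ∀ y, y ∈ u → y ∈ c := fun y hy => huc hy
    have c1 : (i ∪ u) ∩ (i ∪ (c \ u)) = i := by
      ext y
      simp only [Finset.mem_inter, Finset.mem_union, Finset.mem_sdiff]
      constructor
      · rintro ⟨h1 | h1, h2 | h2⟩ <;> first | exact h1 | exact h2 | tauto
      · intro hy; tauto
    have c2 : ((i ∪ u) ∪ (i ∪ (c \ u))) \ i = c := by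
      ext y
      simp only [Finset.mem_sdiff, Finset.mem_union]
      constructor
      · rintro ⟨(h1 | h1) | (h2 | h2), h3⟩ <;> tauto
      · intro hy
        have : y ∉ i := fun h => hic y h hy
        by_cases hu : y ∈ u <;> tauto
    have c3 : (i ∪ u) \ (i ∪ (c \ u)) = u := by
      ext y
      simp only [Finset.mem_sdiff, Finset.mem_union]
      constructor
      · rintro ⟨h1 | h1, h2⟩ <;> tauto
      · intro hy
        have h1 : y ∈ c := huc' y hy
        have h2 : y ∉ i := fun h => hic y h h1
        tauto
    refine Sigma.ext ?_ ?_
    · simp only [c1, c2]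
    · rw [heq_iff_eq]
      exact c3
  · -- right inverse : i (j p) = p
    rintro ⟨a, b⟩ hp
    have c1 : (a ∩ b) ∪ (a \ b) = a := by
      ext y
      simp only [Finset.mem_union, Finset.mem_inter, Finset.mem_sdiff]
      by_cases hy : y ∈ b <;> tauto
    have c2 : (a ∩ b) ∪ (((a ∪ b) \ (a ∩ b)) \ (a \ b)) = b := by
      ext y
      simp only [Finset.mem_union, Finset.mem_inter, Finset.mem_sdiff]
      by_cases hy : y ∈ a <;> by_cases hy2 : y ∈ b <;> tauto
    simp only [c1, c2]
  · -- value equality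
    rintro ⟨⟨i, c⟩, u⟩ hx
    rfl

lemma gradedAD (E : Finset ι) (α β γ δ : Finset ι → ℝ)
    (hα : ∀ A, 0 ≤ α A) (hβ : ∀ A, 0 ≤ β A) (hγ : ∀ A, 0 ≤ γ A) (hδ : ∀ A, 0 ≤ δ A)
    (hyp : ∀ u v : Finset ι, u ⊆ E → v ⊆ E → α u * β v ≤ γ (u ∪ v) * δ (u ∩ v)) (n : ℕ) :
    ∑ p ∈ (E.powerset ×ˢ E.powerset).filter (fun p => p.1.card + p.2.card = n),
      α p.1 * β p.2 ≤
    ∑ p ∈ (E.powerset ×ˢ E.powerset).filter (fun p => p.1.card + p.2.card = n),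
      γ p.1 * δ p.2 := by
  rw [← pair_reindex E n (fun A B => α A * β B), ← pair_reindex E n (fun A B => γ A * δ B)]
  rw [Finset.sum_sigma, Finset.sum_sigma]
  apply Finset.sum_le_sum
  rintro ⟨i, c⟩ hq
  simp only [Finset.mem_filter, Finset.mem_product, Finset.mem_powerset] at hq
  obtain ⟨⟨hiE, hcE⟩, hdisj, hgrade⟩ := hq
  apply star c (fun u => α (i ∪ u)) (fun v => β (i ∪ v)) (fun u => γ (i ∪ u))
    (fun v => δ (i ∪ v)) (fun A => hα _) (fun A => hβ _) (fun A => hγ _) (fun A => hδ _)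
  intro u v hu hv
  have id1 : (i ∪ u) ∪ (i ∪ v) = i ∪ (u ∪ v) := by
    ext y; simp only [Finset.mem_union]; tauto
  have id2 : (i ∪ u) ∩ (i ∪ v) = i ∪ (u ∩ v) := by
    ext y; simp only [Finset.mem_union, Finset.mem_inter]; tauto
  have := hyp (i ∪ u) (i ∪ v) (Finset.union_subset hiE ((hu.trans hcE)))
    (Finset.union_subset hiE ((hv.trans hcE)))
  rwa [id1, id2] at this

-- real-valued lift
noncomputable def liftR (G : YoungDiagram → ℝ) (A : Finset (ℕ × ℕ)) : ℝ :=
  if h : IsYD A then G ⟨A, h⟩ else 0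

lemma liftR_nonneg {G : YoungDiagram → ℝ} (hG : ∀ P, 0 ≤ G P) (A : Finset (ℕ × ℕ)) :
    0 ≤ liftR G A := by
  rw [liftR]; split_ifs; exacts [hG _, le_rfl]

/-- coefficient of `Fser` as a subtype sum -/
lemma Fser_coeff (μ : YoungDiagram → ℝ) (s t : ℝ) (k : YoungDiagram → ℝ) (n : ℕ) :
    PowerSeries.coeff (R := ℝ) n (Fser μ s t k)
      = ∑ lam : {m : YoungDiagram // m.card = n}, k lam.1 * wfun μ s t lam.1 := by
  rw [Fser, PowerSeries.coeff_mk, finsum_eq_sum_of_fintype]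
  apply Finset.sum_congr rfl
  intro lam _
  rw [wfun, lam.2]
  ring

/-- subtype sum to box-world sum -/
lemma sum_card_eq (n a : ℕ) (ha : a ≤ n) (G : YoungDiagram → ℝ) :
    ∑ lam : {m : YoungDiagram // m.card = a}, G lam.1
      = ∑ A ∈ (Finset.range n ×ˢ Finset.range n).powerset.filter (fun A => A.card = a),
          liftR G A := by
  have h1 : ∑ A ∈ ((Finset.range n ×ˢ Finset.range n).powerset.filter
        (fun A => A.card = a)).filter IsYD, liftR G A
      = ∑ A ∈ (Finset.range n ×ˢ Finset.range n).powerset.filter (fun A => A.card = a),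
          liftR G A := by
    apply Finset.sum_filter_of_ne
    intro A _ hne
    by_contra hc
    exact hne (by rw [liftR, dif_neg hc])
  rw [← h1]
  refine (Finset.sum_bij'
    (i := fun (A : Finset (ℕ × ℕ))
        (hA : A ∈ ((Finset.range n ×ˢ Finset.range n).powerset.filter
          (fun A => A.card = a)).filter IsYD) =>
      (⟨⟨A, (Finset.mem_filter.mp hA).2⟩,
        (Finset.mem_filter.mp (Finset.mem_filter.mp hA).1).2⟩ : {m : YoungDiagram // m.card = a}))
    (j := fun lam _ => lam.1.cells) ?_ ?_ ?_ ?_ ?_).symm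
  · intro A hA; exact Finset.mem_univ _
  · intro lam _
    simp only [Finset.mem_filter, Finset.mem_powerset]
    refine ⟨⟨cells_subset_box (le_of_eq (lam.2.trans rfl) |>.trans ha), lam.2⟩, lam.1.isLowerSet⟩
  · intro A hA; rfl
  · intro lam _; rfl
  · intro A hA
    rw [liftR, dif_pos (Finset.mem_filter.mp hA).2]

-- new content
lemma coeff_mul_eq (μ : YoungDiagram → ℝ) (s t : ℝ) (k k' : YoungDiagram → ℝ) (n : ℕ) :
    PowerSeries.coeff (R := ℝ) n (Fser μ s t k * Fser μ s t k')
      = ∑ p ∈ (((Finset.range n ×ˢ Finset.range n).powerset ×ˢ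
            (Finset.range n ×ˢ Finset.range n).powerset).filter
            (fun p => p.1.card + p.2.card = n)),
          liftR (fun P => k P * wfun μ s t P) p.1 *
            liftR (fun P => k' P * wfun μ s t P) p.2 := by
  set box := Finset.range n ×ˢ Finset.range n with hbox
  set f := liftR (fun P => k P * wfun μ s t P) with hf
  set f' := liftR (fun P => k' P * wfun μ s t P) with hf'
  rw [PowerSeries.coeff_mul]
  have hstep : ∀ p : ℕ × ℕ, p ∈ Finset.HasAntidiagonal.antidiagonal n →
      PowerSeries.coeff (R := ℝ) p.1 (Fser μ s t k) * PowerSeries.coeff (R := ℝ) p.2 (Fser μ s t k')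
      = ∑ q ∈ (box.powerset.filter (fun A => A.card = p.1)) ×ˢ
          (box.powerset.filter (fun A => A.card = p.2)), f q.1 * f' q.2 := by
    rintro ⟨a, b⟩ hab
    rw [Finset.HasAntidiagonal.mem_antidiagonal] at hab
    rw [Fser_coeff, Fser_coeff, sum_card_eq n a (by omega) (fun P => k P * wfun μ s t P),
      sum_card_eq n b (by omega) (fun P => k' P * wfun μ s t P)]
    rw [Finset.sum_mul_sum]
    rw [Finset.sum_product]
  rw [Finset.sum_congr rfl hstep]
  -- now group the RHS by fibers
  rw [← Finset.sum_fiberwise_of_maps_to (g := fun p : Finset (ℕ × ℕ) × Finset (ℕ × ℕ) =>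
      (p.1.card, p.2.card)) (t := Finset.HasAntidiagonal.antidiagonal n) ?_ (fun p => f p.1 * f' p.2)]
  · apply Finset.sum_congr rfl
    rintro ⟨a, b⟩ hab
    rw [Finset.HasAntidiagonal.mem_antidiagonal] at hab
    apply Finset.sum_congr _ (fun _ _ => rfl)
    ext ⟨A, B⟩
    simp only [Finset.mem_filter, Finset.mem_product, Finset.mem_powerset, Prod.mk.injEq,
      and_assoc]
    constructor
    · rintro ⟨h1, h2, h3, h4⟩
      exact ⟨h1, h3, by omega, h2, h4⟩
    · rintro ⟨h1, h2, h3, h4, h5⟩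
      exact ⟨h1, h4, h2, h5⟩
  · rintro ⟨A, B⟩ hp
    simp only [Finset.mem_filter] at hp
    rw [Finset.HasAntidiagonal.mem_antidiagonal]
    exact hp.2

lemma swap_sum (n : ℕ) (F G : Finset (ℕ × ℕ) → ℝ) :
    ∑ p ∈ (((Finset.range n ×ˢ Finset.range n).powerset ×ˢ
        (Finset.range n ×ˢ Finset.range n).powerset).filter
        (fun p => p.1.card + p.2.card = n)), F p.1 * G p.2
    = ∑ p ∈ (((Finset.range n ×ˢ Finset.range n).powerset ×ˢ
        (Finset.range n ×ˢ Finset.range n).powerset).filter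
        (fun p => p.1.card + p.2.card = n)), G p.1 * F p.2 := by
  refine Finset.sum_nbij' (i := Prod.swap) (j := Prod.swap) ?_ ?_ ?_ ?_ ?_
  · rintro ⟨A, B⟩ hp
    simp only [Finset.mem_filter, Finset.mem_product, Prod.swap_prod_mk] at hp ⊢
    exact ⟨⟨hp.1.2, hp.1.1⟩, by omega⟩
  · rintro ⟨A, B⟩ hp
    simp only [Finset.mem_filter, Finset.mem_product, Prod.swap_prod_mk] at hp ⊢
    exact ⟨⟨hp.1.2, hp.1.1⟩, by omega⟩
  · rintro ⟨A, B⟩ _; rfl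
  · rintro ⟨A, B⟩ _; rfl
  · rintro ⟨A, B⟩ _
    simp only [Prod.swap_prod_mk]
    ring

theorem stmt_13 (s t : ℝ) (hs : 0 ≤ s) (hst : s ≤ t)
    (μ g h : YoungDiagram → ℝ)
    (hμ0 : ∀ x, 0 ≤ μ x) (hg0 : ∀ x, 0 ≤ g x) (hh0 : ∀ x, 0 ≤ h x)
    (hμ : ∀ x y : YoungDiagram, μ x * μ y ≤ μ (x ⊓ y) * μ (x ⊔ y))
    (hg : Monotone g) (hh : Monotone h) :
    ∀ n : ℕ,
      (PowerSeries.coeff (R := ℝ) n) (Fser μ s t g * Fser μ s t h) ≤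
      (PowerSeries.coeff (R := ℝ) n) (Fser μ s t 1 * Fser μ s t (fun x => g x * h x)) := by
  intro n
  rw [coeff_mul_eq, coeff_mul_eq]
  have e1 : (fun P => (1 : YoungDiagram → ℝ) P * wfun μ s t P) = wfun μ s t := by
    funext P; simp
  rw [e1]
  calc ∑ p ∈ (((Finset.range n ×ˢ Finset.range n).powerset ×ˢ
        (Finset.range n ×ˢ Finset.range n).powerset).filter
        (fun p => p.1.card + p.2.card = n)),
        liftR (fun P => g P * wfun μ s t P) p.1 * liftR (fun P => h P * wfun μ s t P) p.2
      ≤ ∑ p ∈ (((Finset.range n ×ˢ Finset.range n).powerset ×ˢ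
        (Finset.range n ×ˢ Finset.range n).powerset).filter
        (fun p => p.1.card + p.2.card = n)),
        liftR (fun P => g P * h P * wfun μ s t P) p.1 * liftR (wfun μ s t) p.2 := by
        apply gradedAD (Finset.range n ×ˢ Finset.range n)
        · exact liftR_nonneg (fun P => mul_nonneg (hg0 P) (wfun_nonneg μ hμ0 s t P))
        · exact liftR_nonneg (fun P => mul_nonneg (hh0 P) (wfun_nonneg μ hμ0 s t P))
        · exact liftR_nonneg (fun P => mul_nonneg (mul_nonneg (hg0 P) (hh0 P))
            (wfun_nonneg μ hμ0 s t P))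
        · exact liftR_nonneg (wfun_nonneg μ hμ0 s t)
        · intro u v _ _
          rw [liftR, liftR]
          by_cases hu : IsYD u
          · by_cases hv : IsYD v
            · rw [dif_pos hu, dif_pos hv]
              set x : YoungDiagram := ⟨u, hu⟩ with hx
              set y : YoungDiagram := ⟨v, hv⟩ with hy
              have huv : IsYD (u ∪ v) := by
                rw [IsYD, Finset.coe_union]; exact hu.union hv
              have huv' : IsYD (u ∩ v) := by
                rw [IsYD, Finset.coe_inter]; exact hu.inter hv
              rw [liftR, dif_pos huv, liftR, dif_pos huv']
              have e2 : (⟨u ∪ v, huv⟩ : YoungDiagram) = x ⊔ y := by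
                apply YoungDiagram.ext; simp [hx, hy, YoungDiagram.cells_sup]
              have e3 : (⟨u ∩ v, huv'⟩ : YoungDiagram) = x ⊓ y := by
                apply YoungDiagram.ext; simp [hx, hy, YoungDiagram.cells_inf]
              rw [e2, e3]
              have key := wfun_lsm μ s t hs hst hμ0 hμ x y
              have hgm : g x ≤ g (x ⊔ y) := hg le_sup_left
              have hhm : h y ≤ h (x ⊔ y) := hh le_sup_right
              calc g x * wfun μ s t x * (h y * wfun μ s t y)
                  = (g x * h y) * (wfun μ s t x * wfun μ s t y) := by ring
                _ ≤ (g (x ⊔ y) * h (x ⊔ y)) * (wfun μ s t (x ⊓ y) * wfun μ s t (x ⊔ y)) := by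
                    apply mul_le_mul
                    · exact mul_le_mul hgm hhm (hh0 y) (le_trans (hg0 x) hgm)
                    · exact key
                    · exact mul_nonneg (wfun_nonneg μ hμ0 s t x) (wfun_nonneg μ hμ0 s t y)
                    · exact mul_nonneg (le_trans (hg0 x) hgm) (le_trans (hh0 y) hhm)
                _ = g (x ⊔ y) * h (x ⊔ y) * wfun μ s t (x ⊔ y) * wfun μ s t (x ⊓ y) := by ring
            · rw [dif_neg hv, mul_zero]
              exact mul_nonneg (liftR_nonneg (fun P => mul_nonneg (mul_nonneg (hg0 P) (hh0 P))
                (wfun_nonneg μ hμ0 s t P)) _) (liftR_nonneg (wfun_nonneg μ hμ0 s t) _)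
          · rw [dif_neg hu, zero_mul]
            exact mul_nonneg (liftR_nonneg (fun P => mul_nonneg (mul_nonneg (hg0 P) (hh0 P))
              (wfun_nonneg μ hμ0 s t P)) _) (liftR_nonneg (wfun_nonneg μ hμ0 s t) _)
    _ = _ := by
        rw [swap_sum n (liftR (fun P => g P * h P * wfun μ s t P)) (liftR (wfun μ s t))]

end QFKG

open QFKG

/-- q-FKG on Young's lattice: for log-supermodular `μ`, increasing nonnegative
`g, h`, and `0 ≤ s ≤ t`, every coefficient of
`F(1;z)·F(gh;z) − F(g;z)·F(h;z)` is nonnegative. -/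
theorem stmt_13 (s t : ℝ) (hs : 0 ≤ s) (hst : s ≤ t)
    (μ g h : YoungDiagram → ℝ)
    (hμ0 : ∀ x, 0 ≤ μ x) (hg0 : ∀ x, 0 ≤ g x) (hh0 : ∀ x, 0 ≤ h x)
    (hμ : ∀ x y : YoungDiagram, μ x * μ y ≤ μ (x ⊓ y) * μ (x ⊔ y))
    (hg : Monotone g) (hh : Monotone h) :
    ∀ n : ℕ,
      (PowerSeries.coeff (R := ℝ) n) (Fser μ s t g * Fser μ s t h) ≤
      (PowerSeries.coeff (R := ℝ) n) (Fser μ s t 1 * Fser μ s t (fun x => g x * h x)) := by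
  intro n
  rw [coeff_mul_eq, coeff_mul_eq]
  have e1 : (fun P => (1 : YoungDiagram → ℝ) P * wfun μ s t P) = wfun μ s t := by
    funext P; simp
  rw [e1]
  calc ∑ p ∈ (((Finset.range n ×ˢ Finset.range n).powerset ×ˢ
        (Finset.range n ×ˢ Finset.range n).powerset).filter
        (fun p => p.1.card + p.2.card = n)),
        liftR (fun P => g P * wfun μ s t P) p.1 * liftR (fun P => h P * wfun μ s t P) p.2
      ≤ ∑ p ∈ (((Finset.range n ×ˢ Finset.range n).powerset ×ˢ
        (Finset.range n ×ˢ Finset.range n).powerset).filter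
        (fun p => p.1.card + p.2.card = n)),
        liftR (fun P => g P * h P * wfun μ s t P) p.1 * liftR (wfun μ s t) p.2 := by
        apply gradedAD (Finset.range n ×ˢ Finset.range n)
        · exact liftR_nonneg (fun P => mul_nonneg (hg0 P) (wfun_nonneg μ hμ0 s t P))
        · exact liftR_nonneg (fun P => mul_nonneg (hh0 P) (wfun_nonneg μ hμ0 s t P))
        · exact liftR_nonneg (fun P => mul_nonneg (mul_nonneg (hg0 P) (hh0 P))
            (wfun_nonneg μ hμ0 s t P))
        · exact liftR_nonneg (wfun_nonneg μ hμ0 s t)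
        · intro u v _ _
          rw [liftR, liftR]
          by_cases hu : IsYD u
          · by_cases hv : IsYD v
            · rw [dif_pos hu, dif_pos hv]
              set x : YoungDiagram := ⟨u, hu⟩ with hx
              set y : YoungDiagram := ⟨v, hv⟩ with hy
              have huv : IsYD (u ∪ v) := by
                rw [IsYD, Finset.coe_union]; exact hu.union hv
              have huv' : IsYD (u ∩ v) := by
                rw [IsYD, Finset.coe_inter]; exact hu.inter hv
              rw [liftR, dif_pos huv, liftR, dif_pos huv']
              have e2 : (⟨u ∪ v, huv⟩ : YoungDiagram) = x ⊔ y := by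
                apply YoungDiagram.ext; simp [hx, hy, YoungDiagram.cells_sup]
              have e3 : (⟨u ∩ v, huv'⟩ : YoungDiagram) = x ⊓ y := by
                apply YoungDiagram.ext; simp [hx, hy, YoungDiagram.cells_inf]
              rw [e2, e3]
              have key := wfun_lsm μ s t hs hst hμ0 hμ x y
              have hgm : g x ≤ g (x ⊔ y) := hg le_sup_left
              have hhm : h y ≤ h (x ⊔ y) := hh le_sup_right
              calc g x * wfun μ s t x * (h y * wfun μ s t y)
                  = (g x * h y) * (wfun μ s t x * wfun μ s t y) := by ring
                _ ≤ (g (x ⊔ y) * h (x ⊔ y)) * (wfun μ s t (x ⊓ y) * wfun μ s t (x ⊔ y)) := by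
                    apply mul_le_mul
                    · exact mul_le_mul hgm hhm (hh0 y) (le_trans (hg0 x) hgm)
                    · exact key
                    · exact mul_nonneg (wfun_nonneg μ hμ0 s t x) (wfun_nonneg μ hμ0 s t y)
                    · exact mul_nonneg (le_trans (hg0 x) hgm) (le_trans (hh0 y) hhm)
                _ = g (x ⊔ y) * h (x ⊔ y) * wfun μ s t (x ⊔ y) * wfun μ s t (x ⊓ y) := by ring
            · rw [dif_neg hv, mul_zero]
              exact mul_nonneg (liftR_nonneg (fun P => mul_nonneg (mul_nonneg (hg0 P) (hh0 P))
                (wfun_nonneg μ hμ0 s t P)) _) (liftR_nonneg (wfun_nonneg μ hμ0 s t) _)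
          · rw [dif_neg hu, zero_mul]
            exact mul_nonneg (liftR_nonneg (fun P => mul_nonneg (mul_nonneg (hg0 P) (hh0 P))
              (wfun_nonneg μ hμ0 s t P)) _) (liftR_nonneg (wfun_nonneg μ hμ0 s t) _)
    _ = _ := by
        rw [swap_sum n (liftR (fun P => g P * h P * wfun μ s t P)) (liftR (wfun μ s t))]
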